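/- Let v₁, …, v_n be a basis of ℝⁿ, Λ the lattice it spans, U its unit cell, M ⊂ U a finite motif of exactly m ≥ 1 points, S = M + Λ, and PPC(S) = (vol(U)/(m·V_n))^{1/n} where V_n is the volume of the unit ball of ℝⁿ. For p ∈ S and k ≥ 1, let d_k(p) be the k-th smallest element of the multiset {|q − p| : q ∈ S, q ≠ p} of distances from p to the other points of S. Then for every p ∈ S, d_k(p)/k^{1/n} → PPC(S) as k → ∞. -/

import Mathlib

open scoped ENNReal

open MeasureTheory Metric Set
open scoped ENNReal Pointwise

variable {n : ℕ}

abbrev Euc (n : ℕ) := EuclideanSpace ℝ (Fin n)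

lemma latFinite (v : Module.Basis (Fin n) ℝ (Euc n)) (c : Euc n) (r : ℝ) :
    ((Submodule.span ℤ (Set.range v) : Set (Euc n)) ∩ Metric.closedBall c r).Finite := by
  have hd : DiscreteTopology (Submodule.span ℤ (Set.range v) : Set (Euc n)) :=
    inferInstanceAs (DiscreteTopology (Submodule.span ℤ (Set.range v)))
  have hclosed : IsClosed (Submodule.span ℤ (Set.range v) : Set (Euc n)) :=
    AddSubgroup.isClosed_of_discrete (H := (Submodule.span ℤ (Set.range v)).toAddSubgroup)
  have := Metric.finite_isBounded_inter_isClosed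
    (K := Metric.closedBall c r) (s := (Submodule.span ℤ (Set.range v) : Set (Euc n)))
    DiscreteTopology.isDiscrete Metric.isBounded_closedBall hclosed
  exact (Set.inter_comm _ _ ▸ this)

lemma latDisjoint (v : Module.Basis (Fin n) ℝ (Euc n)) {g₁ g₂ : Euc n}
    (h₁ : g₁ ∈ (Submodule.span ℤ (Set.range v) : Set (Euc n)))
    (h₂ : g₂ ∈ (Submodule.span ℤ (Set.range v) : Set (Euc n)))
    {u₁ u₂ : Euc n} (hu₁ : u₁ ∈ ZSpan.fundamentalDomain v)
    (hu₂ : u₂ ∈ ZSpan.fundamentalDomain v) (h : g₁ + u₁ = g₂ + u₂) :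
    g₁ = g₂ ∧ u₁ = u₂ := by
  have e1 : ZSpan.fract v (g₁ + u₁) = u₁ := by
    rw [ZSpan.fract_zSpan_add v u₁ h₁, ZSpan.fract_eq_self.mpr hu₁]
  have e2 : ZSpan.fract v (g₂ + u₂) = u₂ := by
    rw [ZSpan.fract_zSpan_add v u₂ h₂, ZSpan.fract_eq_self.mpr hu₂]
  have hu : u₁ = u₂ := by rw [← e1, h, e2]
  refine ⟨?_, hu⟩
  have := h
  rw [hu] at this
  exact add_right_cancel this

lemma latCount (v : Module.Basis (Fin n) ℝ (Euc n)) (c : Euc n) (r : ℝ) :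
    volume (Metric.closedBall c (r - ∑ i, ‖v i‖)) ≤
      (((Submodule.span ℤ (Set.range v) : Set (Euc n)) ∩ Metric.closedBall c r).ncard : ℝ≥0∞) *
        volume (ZSpan.fundamentalDomain v) ∧
    (((Submodule.span ℤ (Set.range v) : Set (Euc n)) ∩ Metric.closedBall c r).ncard : ℝ≥0∞) *
        volume (ZSpan.fundamentalDomain v) ≤
      volume (Metric.closedBall c (r + ∑ i, ‖v i‖)) := by
  classical
  set L : Set (Euc n) := (Submodule.span ℤ (Set.range v) : Set (Euc n)) with hL
  set D : ℝ := ∑ i, ‖v i‖ with hD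
  set F : Set (Euc n) := L ∩ Metric.closedBall c r with hF
  have hFfin : F.Finite := latFinite v c r
  set T : Finset (Euc n) := hFfin.toFinset with hT
  have hcard : (F.ncard : ℝ≥0∞) = (T.card : ℝ≥0∞) := by
    rw [Set.ncard_eq_toFinset_card F hFfin]
  have hnormU : ∀ u ∈ ZSpan.fundamentalDomain v, ‖u‖ ≤ D := by
    intro u hu
    rw [← ZSpan.fract_eq_self.mpr hu]
    exact ZSpan.norm_fract_le v u
  -- measure of the union
  have hmeas : ∀ g : Euc n, MeasurableSet (g +ᵥ ZSpan.fundamentalDomain v) := by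
    intro g
    exact (ZSpan.fundamentalDomain_measurableSet v).const_vadd g
  have hdis : (T : Set (Euc n)).PairwiseDisjoint (fun g => g +ᵥ ZSpan.fundamentalDomain v) := by
    intro g₁ hg₁ g₂ hg₂ hne
    refine Set.disjoint_left.mpr fun x hx₁ hx₂ => hne ?_
    obtain ⟨u₁, hu₁, rfl⟩ := hx₁
    obtain ⟨u₂, hu₂, he⟩ := hx₂
    have hg₁' : g₁ ∈ F := by simpa [hT] using hg₁
    have hg₂' : g₂ ∈ F := by simpa [hT] using hg₂
    exact (latDisjoint v hg₁'.1 hg₂'.1 hu₁ hu₂ (by simpa [vadd_eq_add] using he.symm)).1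
  have hunion : volume (⋃ g ∈ T, g +ᵥ ZSpan.fundamentalDomain v) =
      (T.card : ℝ≥0∞) * volume (ZSpan.fundamentalDomain v) := by
    rw [measure_biUnion_finset hdis (fun g _ => hmeas g)]
    simp [measure_vadd, Finset.sum_const, nsmul_eq_mul]
  constructor
  · -- lower bound : closedBall c (r-D) ⊆ union
    have hsub : Metric.closedBall c (r - D) ⊆ ⋃ g ∈ T, g +ᵥ ZSpan.fundamentalDomain v := by
      intro x hx
      have hxd : dist x c ≤ r - D := Metric.mem_closedBall.mp hx
      set u : Euc n := ZSpan.fract v x with hu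
      have huF : u ∈ ZSpan.fundamentalDomain v := ZSpan.fract_mem_fundamentalDomain v x
      set g : Euc n := x - u with hg
      have hgL : g ∈ L := by
        rw [hg, hu, ZSpan.fract_apply]
        simpa using ((ZSpan.floor v x) : Euc n).2
      have hgF : g ∈ F := by
        refine ⟨hgL, Metric.mem_closedBall.mpr ?_⟩
        have : dist g c ≤ dist x c + ‖u‖ := by
          rw [hg, dist_eq_norm, dist_eq_norm]
          calc ‖x - u - c‖ = ‖(x - c) + (-u)‖ := by rw [sub_right_comm, sub_eq_add_neg]
            _ ≤ ‖x - c‖ + ‖-u‖ := norm_add_le _ _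
            _ = ‖x - c‖ + ‖u‖ := by rw [norm_neg]
        have := this.trans (add_le_add hxd (hnormU u huF))
        linarith
      refine Set.mem_biUnion (hFfin.mem_toFinset.mpr hgF) ?_
      exact ⟨u, huF, by show g + u = x; rw [hg]; abel⟩
    calc volume (Metric.closedBall c (r - D)) ≤ volume (⋃ g ∈ T, g +ᵥ ZSpan.fundamentalDomain v) :=
          measure_mono hsub
      _ = (T.card : ℝ≥0∞) * volume (ZSpan.fundamentalDomain v) := hunion
      _ = (F.ncard : ℝ≥0∞) * volume (ZSpan.fundamentalDomain v) := by rw [hcard]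
  · -- upper bound : union ⊆ closedBall c (r+D)
    have hsub : (⋃ g ∈ T, g +ᵥ ZSpan.fundamentalDomain v) ⊆ Metric.closedBall c (r + D) := by
      intro x hx
      obtain ⟨g, hg, u, hu, rfl⟩ := by
        simpa only [Set.mem_iUnion, exists_prop] using hx
      have hgF : g ∈ F := by simpa [hT] using hg
      have hgd : dist g c ≤ r := Metric.mem_closedBall.mp hgF.2
      refine Metric.mem_closedBall.mpr ?_
      have : dist (g + u) c ≤ dist g c + ‖u‖ := by
        rw [dist_eq_norm, dist_eq_norm]
        calc ‖g + u - c‖ = ‖(g - c) + u‖ := by rw [add_sub_right_comm]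
          _ ≤ ‖g - c‖ + ‖u‖ := norm_add_le _ _
      have h2 := this.trans (add_le_add hgd (hnormU u hu))
      simpa [vadd_eq_add] using h2
    calc (F.ncard : ℝ≥0∞) * volume (ZSpan.fundamentalDomain v)
        = volume (⋃ g ∈ T, g +ᵥ ZSpan.fundamentalDomain v) := by rw [hunion, hcard]
      _ ≤ volume (Metric.closedBall c (r + D)) := measure_mono hsub

lemma sDecomp (v : Module.Basis (Fin n) ℝ (Euc n)) (M : Finset (Euc n))
    (hM : ∀ a ∈ M, a ∈ ZSpan.fundamentalDomain v) (p : Euc n) (r : ℝ)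
    (S : Set (Euc n))
    (hS : S = {x | ∃ a ∈ M, ∃ g ∈ (Submodule.span ℤ (Set.range v) : Set (Euc n)), x = a + g}) :
    (S ∩ Metric.closedBall p r).Finite ∧
    (S ∩ Metric.closedBall p r).ncard
      = ∑ a ∈ M, ((Submodule.span ℤ (Set.range v) : Set (Euc n)) ∩
          Metric.closedBall (p - a) r).ncard := by
  classical
  set L : Set (Euc n) := (Submodule.span ℤ (Set.range v) : Set (Euc n)) with hLdef
  have hdist : ∀ (a g : Euc n), dist (a + g) p = dist g (p - a) := by
    intro a g
    rw [dist_eq_norm, dist_eq_norm]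
    congr 1; abel
  set f : Euc n → Finset (Euc n) := fun a => (latFinite v (p - a) r).toFinset.image (a + ·)
    with hfdef
  have hSc : S ∩ Metric.closedBall p r = ↑(M.biUnion f) := by
    ext x
    simp only [Finset.coe_biUnion, Set.mem_iUnion, Finset.mem_coe, Finset.mem_biUnion, hfdef,
      Finset.mem_image, Set.Finite.mem_toFinset, Set.mem_inter_iff]
    constructor
    · rintro ⟨hxS, hxb⟩
      rw [hS] at hxS
      obtain ⟨a, ha, g, hg, rfl⟩ := hxS
      refine ⟨a, ha, g, ⟨hg, ?_⟩, rfl⟩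
      rw [Metric.mem_closedBall, ← hdist]
      exact Metric.mem_closedBall.mp hxb
    · rintro ⟨a, ha, g, ⟨⟨hgL, hgb⟩, rfl⟩⟩
      refine ⟨by rw [hS]; exact ⟨a, ha, g, hgL, rfl⟩, ?_⟩
      rw [Metric.mem_closedBall, hdist]
      exact Metric.mem_closedBall.mp hgb
  have hdisj : ∀ a₁ ∈ M, ∀ a₂ ∈ M, a₁ ≠ a₂ → Disjoint (f a₁) (f a₂) := by
    intro a₁ ha₁ a₂ ha₂ hne
    refine Finset.disjoint_left.mpr fun x hx₁ hx₂ => hne ?_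
    simp only [hfdef, Finset.mem_image, Set.Finite.mem_toFinset] at hx₁ hx₂
    obtain ⟨g₁, ⟨hg₁, _⟩, rfl⟩ := hx₁
    obtain ⟨g₂, ⟨hg₂, _⟩, he⟩ := hx₂
    have : g₁ + a₁ = g₂ + a₂ := by rw [add_comm g₁ a₁, add_comm g₂ a₂]; exact he.symm
    exact ((latDisjoint v hg₁ hg₂ (hM a₁ ha₁) (hM a₂ ha₂) this).2)
  have hfin : (S ∩ Metric.closedBall p r).Finite := by
    rw [hSc]; exact (M.biUnion f).finite_toSet
  refine ⟨hfin, ?_⟩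
  have hcard : (S ∩ Metric.closedBall p r).ncard = (M.biUnion f).card := by
    rw [hSc, Set.ncard_coe_finset]
  rw [hcard, Finset.card_biUnion hdisj]
  refine Finset.sum_congr rfl fun a _ => ?_
  rw [hfdef]
  simp only
  rw [Finset.card_image_of_injective _ (add_right_injective a),
    Set.ncard_eq_toFinset_card _ (latFinite v (p - a) r)]

lemma sCount (v : Module.Basis (Fin n) ℝ (Euc n)) (M : Finset (Euc n))
    (hM : ∀ a ∈ M, a ∈ ZSpan.fundamentalDomain v) (p : Euc n) (r : ℝ)
    (S : Set (Euc n))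
    (hS : S = {x | ∃ a ∈ M, ∃ g ∈ (Submodule.span ℤ (Set.range v) : Set (Euc n)), x = a + g}) :
    (M.card : ℝ≥0∞) * volume (Metric.closedBall (0 : Euc n) (r - (2 * (∑ i, ‖v i‖) + ‖p‖))) ≤
      ((S ∩ Metric.closedBall p r).ncard : ℝ≥0∞) * volume (ZSpan.fundamentalDomain v) ∧
    ((S ∩ Metric.closedBall p r).ncard : ℝ≥0∞) * volume (ZSpan.fundamentalDomain v) ≤
      (M.card : ℝ≥0∞) * volume (Metric.closedBall (0 : Euc n) (r + (2 * (∑ i, ‖v i‖) + ‖p‖))) := by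
  classical
  set L : Set (Euc n) := (Submodule.span ℤ (Set.range v) : Set (Euc n)) with hLdef
  set D : ℝ := ∑ i, ‖v i‖ with hDdef
  set C : ℝ := 2 * D + ‖p‖ with hCdef
  have hpa : ∀ a ∈ M, ‖p - a‖ ≤ ‖p‖ + D := by
    intro a ha
    have h1 : ‖a‖ ≤ D := by
      rw [← ZSpan.fract_eq_self.mpr (hM a ha)]
      exact ZSpan.norm_fract_le v a
    calc ‖p - a‖ ≤ ‖p‖ + ‖a‖ := norm_sub_le _ _
      _ ≤ ‖p‖ + D := by linarith
  obtain ⟨-, hsum⟩ := sDecomp v M hM p r S hS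
  have key : ((S ∩ Metric.closedBall p r).ncard : ℝ≥0∞) * volume (ZSpan.fundamentalDomain v)
      = ∑ a ∈ M, ((L ∩ Metric.closedBall (p - a) r).ncard : ℝ≥0∞) *
          volume (ZSpan.fundamentalDomain v) := by
    rw [hsum]
    push_cast
    rw [Finset.sum_mul]
  constructor
  · rw [key]
    have : (M.card : ℝ≥0∞) * volume (Metric.closedBall (0 : Euc n) (r - C))
        = ∑ _a ∈ M, volume (Metric.closedBall (0 : Euc n) (r - C)) := by
      rw [Finset.sum_const, nsmul_eq_mul]
    rw [this]
    refine Finset.sum_le_sum fun a ha => ?_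
    refine le_trans (measure_mono ?_) (latCount v (p - a) r).1
    intro x hx
    rw [Metric.mem_closedBall, dist_zero_right] at hx
    rw [Metric.mem_closedBall, ← hDdef]
    have h1 : dist x (p - a) ≤ ‖x‖ + ‖p - a‖ := by
      rw [dist_eq_norm]; exact norm_sub_le _ _
    have h2 := hpa a ha
    rw [hCdef] at hx
    linarith
  · rw [key]
    have : (M.card : ℝ≥0∞) * volume (Metric.closedBall (0 : Euc n) (r + C))
        = ∑ _a ∈ M, volume (Metric.closedBall (0 : Euc n) (r + C)) := by
      rw [Finset.sum_const, nsmul_eq_mul]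
    rw [this]
    refine Finset.sum_le_sum fun a ha => ?_
    refine le_trans (latCount v (p - a) r).2 (measure_mono ?_)
    intro x hx
    rw [Metric.mem_closedBall, ← hDdef] at hx
    rw [Metric.mem_closedBall, dist_zero_right, hCdef]
    have h1 : ‖x‖ ≤ dist x (p - a) + ‖p - a‖ := by
      rw [dist_eq_norm]
      calc ‖x‖ = ‖(x - (p - a)) + (p - a)‖ := by rw [sub_add_cancel]
        _ ≤ ‖x - (p - a)‖ + ‖p - a‖ := norm_add_le _ _
    have h2 := hpa a ha
    linarith


set_option maxHeartbeats 1000000 in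
/-- Let `Λ` be the lattice spanned by a basis `v₁,…,v_n` of
`ℝⁿ`, `U` its unit cell, `M ⊂ U` a motif of exactly `m ≥ 1` points,
`S = M + Λ`, and `PPC(S) = (vol(U)/(m·V_n))^(1/n)`. For `p ∈ S` let `d_k(p)`
be the `k`-th smallest element (with multiplicity) of the distances from `p`
to the other points of `S` (characterized by: `d_k(p)` is such a distance, at
most `k−1` points `q ≠ p` of `S` have `dist q p < d_k(p)` and at least `k`
have `dist q p ≤ d_k(p)`). Then `d_k(p)/k^(1/n) → PPC(S)` as `k → ∞`. -/
theorem stmt_17 (n m : ℕ) (hn : 1 ≤ n) (hm : 1 ≤ m)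
    (v : Module.Basis (Fin n) ℝ (EuclideanSpace ℝ (Fin n)))
    (Λ : Set (EuclideanSpace ℝ (Fin n)))
    (hΛ : Λ = {x | ∃ c : Fin n → ℤ, x = ∑ i, (c i : ℝ) • v i})
    (U : Set (EuclideanSpace ℝ (Fin n)))
    (hU : U = {x | ∃ t : Fin n → ℝ, (∀ i, t i ∈ Set.Ico (0 : ℝ) 1) ∧
      x = ∑ i, t i • v i})
    (M : Finset (EuclideanSpace ℝ (Fin n))) (hMcard : M.card = m)
    (hMU : ∀ a ∈ M, a ∈ U)
    (S : Set (EuclideanSpace ℝ (Fin n)))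
    (hS : S = {x | ∃ a ∈ M, ∃ g ∈ Λ, x = a + g})
    (PPC : ℝ)
    (hPPC : PPC = ((MeasureTheory.volume U).toReal /
      ((m : ℝ) * (MeasureTheory.volume
        (Metric.ball (0 : EuclideanSpace ℝ (Fin n)) 1)).toReal)) ^ ((1 : ℝ) / n))
    (p : EuclideanSpace ℝ (Fin n)) (hp : p ∈ S)
    (dk : ℕ → ℝ)
    (hdk : ∀ k : ℕ, 1 ≤ k →
      (∃ q ∈ S, q ≠ p ∧ dist q p = dk k) ∧
      {q | q ∈ S ∧ q ≠ p ∧ dist q p < dk k}.Finite ∧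
      {q | q ∈ S ∧ q ≠ p ∧ dist q p < dk k}.ncard ≤ k - 1 ∧
      {q | q ∈ S ∧ q ≠ p ∧ dist q p ≤ dk k}.Finite ∧
      k ≤ {q | q ∈ S ∧ q ≠ p ∧ dist q p ≤ dk k}.ncard) :
    Filter.Tendsto (fun k : ℕ => dk k / (k : ℝ) ^ ((1 : ℝ) / n))
      Filter.atTop (nhds PPC) := by
  classical
  have hn0 : (n : ℝ) ≠ 0 := Nat.cast_ne_zero.mpr (by omega)
  -- identify the lattice and the unit cell
  have hΛL : Λ = (Submodule.span ℤ (Set.range v) : Set (Euc n)) := by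
    rw [hΛ]
    ext x
    simp only [Set.mem_setOf_eq, SetLike.mem_coe, Submodule.mem_span_range_iff_exists_fun]
    constructor
    · rintro ⟨c, rfl⟩
      exact ⟨c, by simp_rw [Int.cast_smul_eq_zsmul]⟩
    · rintro ⟨c, hc⟩
      exact ⟨c, by rw [← hc]; simp_rw [Int.cast_smul_eq_zsmul]⟩
  have hUF : U = ZSpan.fundamentalDomain v := by
    rw [hU]
    ext x
    rw [ZSpan.mem_fundamentalDomain]
    constructor
    · rintro ⟨t, ht, rfl⟩
      intro i
      have := congrFun (v.repr_sum_self t) i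
      rw [this]
      exact ht i
    · intro h
      exact ⟨fun i => v.repr x i, h, (v.sum_repr x).symm⟩
  have hS' : S = {x | ∃ a ∈ M, ∃ g ∈ (Submodule.span ℤ (Set.range v) : Set (Euc n)), x = a + g} := by
    rw [hS, hΛL]
  have hMF : ∀ a ∈ M, a ∈ ZSpan.fundamentalDomain v := fun a ha => hUF ▸ hMU a ha
  -- basic volume facts
  have hUvol_ne : volume U ≠ 0 := by
    rw [hUF]; exact ZSpan.measure_fundamentalDomain_ne_zero v
  have hUvol_fin : volume U ≠ ⊤ := by
    obtain ⟨R, hR⟩ := (ZSpan.fundamentalDomain_isBounded v (K := ℝ)).subset_closedBall 0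
    rw [hUF]
    exact ((measure_mono hR).trans_lt measure_closedBall_lt_top).ne
  have hB_pos : 0 < volume (Metric.ball (0 : Euc n) 1) := Metric.measure_ball_pos _ _ one_pos
  have hB_fin : volume (Metric.ball (0 : Euc n) 1) ≠ ⊤ := measure_ball_lt_top.ne
  set B : ℝ := (volume (Metric.ball (0 : Euc n) 1)).toReal with hBdef
  set volU : ℝ := (volume U).toReal with hvolUdef
  have hBpos : 0 < B := ENNReal.toReal_pos hB_pos.ne' hB_fin
  have hUpos : 0 < volU := ENNReal.toReal_pos hUvol_ne hUvol_fin
  set D : ℝ := ∑ i, ‖v i‖ with hDdef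
  have hD0 : 0 ≤ D := Finset.sum_nonneg fun i _ => norm_nonneg _
  set C : ℝ := 2 * D + ‖p‖ with hCdef
  have hC0 : 0 ≤ C := by positivity
  have hmB : (0:ℝ) < (m : ℝ) * B := by
    have : (0:ℝ) < (m:ℝ) := by exact_mod_cast hm
    positivity
  -- volume of closed balls in real terms
  have hvolcb : ∀ R : ℝ, 0 ≤ R →
      (volume (Metric.closedBall (0 : Euc n) R)).toReal = R ^ n * B := by
    intro R hR
    rw [Measure.addHaar_closedBall volume 0 hR, ENNReal.toReal_mul,
      ENNReal.toReal_ofReal (by positivity), finrank_euclideanSpace_fin]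
  -- counting function
  set N : ℝ → ℕ := fun r => (S ∩ Metric.closedBall p r).ncard with hNdef
  have hNfin : ∀ r : ℝ, (S ∩ Metric.closedBall p r).Finite :=
    fun r => (sDecomp v M hMF p r S hS').1
  have hcount_up : ∀ r : ℝ, 0 ≤ r → (N r : ℝ) * volU ≤ m * ((r + C) ^ n * B) := by
    intro r hr
    have h := (sCount v M hMF p r S hS').2
    rw [← hUF] at h
    rw [hMcard] at h
    have hfin1 : ((N r : ℝ≥0∞)) * volume U ≠ ⊤ :=
      ENNReal.mul_ne_top (ENNReal.natCast_ne_top _) hUvol_fin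
    have hfin2 : (m : ℝ≥0∞) * volume (Metric.closedBall (0 : Euc n) (r + C)) ≠ ⊤ :=
      ENNReal.mul_ne_top (ENNReal.natCast_ne_top _) measure_closedBall_lt_top.ne
    have := ENNReal.toReal_le_toReal hfin1 hfin2 |>.mpr (by exact_mod_cast h)
    rw [ENNReal.toReal_mul, ENNReal.toReal_mul, ENNReal.toReal_natCast,
      ENNReal.toReal_natCast, hvolcb (r + C) (by linarith)] at this
    exact this
  have hcount_lo : ∀ r : ℝ, C ≤ r → (m : ℝ) * ((r - C) ^ n * B) ≤ (N r : ℝ) * volU := by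
    intro r hr
    have h := (sCount v M hMF p r S hS').1
    rw [← hUF] at h
    rw [hMcard] at h
    have hfin1 : ((N r : ℝ≥0∞)) * volume U ≠ ⊤ :=
      ENNReal.mul_ne_top (ENNReal.natCast_ne_top _) hUvol_fin
    have hfin2 : (m : ℝ≥0∞) * volume (Metric.closedBall (0 : Euc n) (r - C)) ≠ ⊤ :=
      ENNReal.mul_ne_top (ENNReal.natCast_ne_top _) measure_closedBall_lt_top.ne
    have := ENNReal.toReal_le_toReal hfin2 hfin1 |>.mpr (by exact_mod_cast h)
    rw [ENNReal.toReal_mul, ENNReal.toReal_mul, ENNReal.toReal_natCast,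
      ENNReal.toReal_natCast, hvolcb (r - C) (by linarith)] at this
    exact this
  -- rpow root lemmas
  have hroot_le : ∀ x y : ℝ, 0 ≤ x → 0 ≤ y → x ≤ y ^ n → x ^ ((1:ℝ)/n) ≤ y := by
    intro x y hx hy hxy
    have h1 : x ^ ((1:ℝ)/n) ≤ (y ^ n) ^ ((1:ℝ)/n) :=
      Real.rpow_le_rpow hx hxy (by positivity)
    rwa [← Real.rpow_natCast y n, ← Real.rpow_mul hy, mul_one_div, div_self hn0,
      Real.rpow_one] at h1
  have hroot_ge : ∀ x y : ℝ, 0 ≤ y → y ^ n ≤ x → y ≤ x ^ ((1:ℝ)/n) := by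
    intro x y hy hxy
    have hx : 0 ≤ x := le_trans (by positivity) hxy
    have h1 : (y ^ n) ^ ((1:ℝ)/n) ≤ x ^ ((1:ℝ)/n) :=
      Real.rpow_le_rpow (by positivity) hxy (by positivity)
    rwa [← Real.rpow_natCast y n, ← Real.rpow_mul hy, mul_one_div, div_self hn0,
      Real.rpow_one] at h1
  -- PPC * k^{1/n} as a root
  have hPPC0 : 0 ≤ PPC := by rw [hPPC]; positivity
  have hPPCk : ∀ k : ℕ, ((k : ℝ) * volU / ((m:ℝ) * B)) ^ ((1:ℝ)/n)
      = PPC * (k : ℝ) ^ ((1:ℝ)/n) := by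
    intro k
    rw [hPPC, hvolUdef, hBdef]
    rw [show (k : ℝ) * (volume U).toReal / ((m:ℝ) * B)
        = (volume U).toReal / ((m:ℝ) * B) * (k : ℝ) by ring]
    rw [Real.mul_rpow (by positivity) (Nat.cast_nonneg k)]
  -- two key bounds for each k ≥ 1
  have key_up : ∀ k : ℕ, 1 ≤ k → PPC * (k : ℝ) ^ ((1:ℝ)/n) ≤ dk k + C := by
    intro k hk
    obtain ⟨⟨q, hqS, hqne, hqd⟩, hltfin, hltcard, hlefin, hlecard⟩ := hdk k hk
    have hr0 : 0 ≤ dk k := hqd ▸ dist_nonneg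
    have hsubk : {q | q ∈ S ∧ q ≠ p ∧ dist q p ≤ dk k} ⊆ S ∩ Metric.closedBall p (dk k) :=
      fun x hx => ⟨hx.1, Metric.mem_closedBall.mpr hx.2.2⟩
    have hk1 : (k : ℝ) ≤ N (dk k) := by
      exact_mod_cast le_trans hlecard (Set.ncard_le_ncard hsubk (hNfin (dk k)))
    have h2 : (k : ℝ) * volU ≤ m * ((dk k + C) ^ n * B) :=
      le_trans (mul_le_mul_of_nonneg_right hk1 hUpos.le) (hcount_up (dk k) hr0)
    have h3 : (k : ℝ) * volU / ((m:ℝ) * B) ≤ (dk k + C) ^ n := by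
      rw [div_le_iff₀ hmB]
      calc (k : ℝ) * volU ≤ m * ((dk k + C) ^ n * B) := h2
        _ = (dk k + C) ^ n * ((m:ℝ) * B) := by ring
    have := hroot_le ((k : ℝ) * volU / ((m:ℝ) * B)) (dk k + C)
      (by positivity) (by linarith) h3
    rwa [hPPCk k] at this
  have key_lo : ∀ k : ℕ, 1 ≤ k → dk k ≤ PPC * (k : ℝ) ^ ((1:ℝ)/n) + C := by
    intro k hk
    obtain ⟨⟨q, hqS, hqne, hqd⟩, hltfin, hltcard, hlefin, hlecard⟩ := hdk k hk
    have hkn0 : 0 ≤ PPC * (k : ℝ) ^ ((1:ℝ)/n) := by positivity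
    by_contra hcon
    push_neg at hcon
    set s : ℝ := (PPC * (k : ℝ) ^ ((1:ℝ)/n) + C + dk k) / 2 with hsdef
    have hs1 : PPC * (k : ℝ) ^ ((1:ℝ)/n) + C < s := by rw [hsdef]; linarith
    have hs2 : s < dk k := by rw [hsdef]; linarith
    have hsC : C ≤ s := by linarith
    -- N s ≤ k
    have hNs : (N s : ℝ) ≤ k := by
      have hsub1 : S ∩ Metric.closedBall p s ⊆
          insert p {q | q ∈ S ∧ q ≠ p ∧ dist q p < dk k} := by
        intro x hx
        by_cases hxp : x = p
        · exact Set.mem_insert_iff.mpr (Or.inl hxp)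
        · refine Set.mem_insert_iff.mpr (Or.inr ⟨hx.1, hxp, ?_⟩)
          exact lt_of_le_of_lt (Metric.mem_closedBall.mp hx.2) hs2
      have h4 : N s ≤ {q | q ∈ S ∧ q ≠ p ∧ dist q p < dk k}.ncard + 1 := by
        refine le_trans (Set.ncard_le_ncard hsub1 (hltfin.insert p)) ?_
        exact Set.ncard_insert_le _ _
      have h5 : N s ≤ k := by omega
      exact_mod_cast h5
    have h6 : (m : ℝ) * ((s - C) ^ n * B) ≤ (k : ℝ) * volU :=
      le_trans (hcount_lo s hsC) (mul_le_mul_of_nonneg_right hNs hUpos.le)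
    have h7 : (s - C) ^ n ≤ (k : ℝ) * volU / ((m:ℝ) * B) := by
      rw [le_div_iff₀ hmB]
      calc (s - C) ^ n * ((m:ℝ) * B) = (m:ℝ) * ((s - C) ^ n * B) := by ring
        _ ≤ (k : ℝ) * volU := h6
    have h8 := hroot_ge ((k : ℝ) * volU / ((m:ℝ) * B)) (s - C) (by linarith) h7
    rw [hPPCk k] at h8
    linarith
  -- final squeeze
  have hKpos : ∀ k : ℕ, 1 ≤ k → (0:ℝ) < (k : ℝ) ^ ((1:ℝ)/n) := by
    intro k hk
    have : (0:ℝ) < (k:ℝ) := by exact_mod_cast hk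
    positivity
  have htend0 : Filter.Tendsto (fun k : ℕ => C / (k : ℝ) ^ ((1:ℝ)/n))
      Filter.atTop (nhds 0) := by
    have h1 : Filter.Tendsto (fun k : ℕ => ((k:ℝ)) ^ ((1:ℝ)/n)) Filter.atTop Filter.atTop :=
      (tendsto_rpow_atTop (by positivity)).comp tendsto_natCast_atTop_atTop
    exact Filter.Tendsto.div_atTop tendsto_const_nhds h1
  have hlo : Filter.Tendsto (fun k : ℕ => PPC - C / (k : ℝ) ^ ((1:ℝ)/n))
      Filter.atTop (nhds PPC) := by
    simpa using tendsto_const_nhds.sub htend0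
  have hhi : Filter.Tendsto (fun k : ℕ => PPC + C / (k : ℝ) ^ ((1:ℝ)/n))
      Filter.atTop (nhds PPC) := by
    simpa using tendsto_const_nhds.add htend0
  refine tendsto_of_tendsto_of_tendsto_of_le_of_le' hlo hhi ?_ ?_
  · filter_upwards [Filter.eventually_ge_atTop 1] with k hk
    have hK := hKpos k hk
    have h1 := key_up k hk
    have heq : PPC - C / (k:ℝ) ^ ((1:ℝ)/n)
        = (PPC * (k:ℝ) ^ ((1:ℝ)/n) - C) / (k:ℝ) ^ ((1:ℝ)/n) := by
      field_simp
    rw [heq]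
    exact (div_le_div_iff_of_pos_right hK).mpr (by linarith)
  · filter_upwards [Filter.eventually_ge_atTop 1] with k hk
    have hK := hKpos k hk
    have h1 := key_lo k hk
    have heq : PPC + C / (k:ℝ) ^ ((1:ℝ)/n)
        = (PPC * (k:ℝ) ^ ((1:ℝ)/n) + C) / (k:ℝ) ^ ((1:ℝ)/n) := by
      field_simp
    rw [heq]
    exact (div_le_div_iff_of_pos_right hK).mpr (by linarith)
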